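/- Let p ∈ ℝ³ with strictly positive components satisfying the strict triangle inequalities p₁ < p₂+p₃, p₂ < p₁+p₃, p₃ < p₁+p₂. Then the symmetric matrix A with unit diagonal and a₁₂ = (p₃²-p₁²-p₂²)/(2p₁p₂), a₁₃ = (p₂²-p₁²-p₃²)/(2p₁p₃), a₂₃ = (p₁²-p₂²-p₃²)/(2p₂p₃) has rank exactly 2. -/

import Mathlib

open Matrix

theorem stmt_12 (p₁ p₂ p₃ : ℝ) (hp₁ : 0 < p₁) (hp₂ : 0 < p₂) (hp₃ : 0 < p₃)
    (h₁ : p₁ < p₂ + p₃) (h₂ : p₂ < p₁ + p₃) (h₃ : p₃ < p₁ + p₂) :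
    (!![1, (p₃ ^ 2 - p₁ ^ 2 - p₂ ^ 2) / (2 * p₁ * p₂),
          (p₂ ^ 2 - p₁ ^ 2 - p₃ ^ 2) / (2 * p₁ * p₃);
        (p₃ ^ 2 - p₁ ^ 2 - p₂ ^ 2) / (2 * p₁ * p₂), 1,
          (p₁ ^ 2 - p₂ ^ 2 - p₃ ^ 2) / (2 * p₂ * p₃);
        (p₂ ^ 2 - p₁ ^ 2 - p₃ ^ 2) / (2 * p₁ * p₃),
          (p₁ ^ 2 - p₂ ^ 2 - p₃ ^ 2) / (2 * p₂ * p₃), 1] : Matrix (Fin 3) (Fin 3) ℝ).rank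
      = 2 := by
  set a : ℝ := (p₃ ^ 2 - p₁ ^ 2 - p₂ ^ 2) / (2 * p₁ * p₂) with ha
  set b : ℝ := (p₂ ^ 2 - p₁ ^ 2 - p₃ ^ 2) / (2 * p₁ * p₃) with hb
  set c : ℝ := (p₁ ^ 2 - p₂ ^ 2 - p₃ ^ 2) / (2 * p₂ * p₃) with hc
  set A : Matrix (Fin 3) (Fin 3) ℝ := !![1, a, b; a, 1, c; b, c, 1] with hA
  have hp₁' := hp₁.ne'
  have hp₂' := hp₂.ne'
  have hp₃' := hp₃.ne'
  -- upper bound: A *ᵥ p = 0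
  have hker : A *ᵥ ![p₁, p₂, p₃] = 0 := by
    funext i
    fin_cases i <;>
      simp [mulVec, dotProduct, Fin.sum_univ_three, ha, hb, hc, A] <;>
      field_simp <;> ring
  have hle : A.rank ≤ 2 := by
    have h3 : A.rank + 1 ≤ 3 := by
      have hnz : (![p₁, p₂, p₃] : Fin 3 → ℝ) ≠ 0 := by
        intro h
        have := congrFun h 0
        simp at this
        exact hp₁.ne' this
      have hker' : (![p₁, p₂, p₃] : Fin 3 → ℝ) ∈ LinearMap.ker A.mulVecLin := by
        simpa [Matrix.mulVecLin_apply] using hker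
      have hkpos : 0 < Module.finrank ℝ (LinearMap.ker A.mulVecLin) := by
        have : Nontrivial (LinearMap.ker A.mulVecLin) :=
          ⟨⟨⟨_, hker'⟩, 0, by simpa using hnz⟩⟩
        exact Module.finrank_pos
      have := LinearMap.finrank_range_add_finrank_ker A.mulVecLin
      rw [Module.finrank_fin_fun] at this
      calc A.rank + 1 ≤ A.rank + Module.finrank ℝ (LinearMap.ker A.mulVecLin) := by omega
        _ = 3 := this
    omega
  -- lower bound: top-left 2x2 block
  have hge : 2 ≤ A.rank := by
    set C : Matrix (Fin 2) (Fin 3) ℝ := !![1,0,0;0,1,0] with hC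
    set B : Matrix (Fin 3) (Fin 2) ℝ := !![(1:ℝ),0;0,1;0,0] with hB
    have hprod : C * A * B = !![1, a; a, 1] := by
      simp only [hC, hB]
      ext i j
      fin_cases i <;> fin_cases j <;>
        simp [Matrix.mul_apply, Fin.sum_univ_three, Fin.sum_univ_two, A]
    have ha2 : a ^ 2 < 1 := by
      rw [ha, div_pow, div_lt_one (by positivity)]
      nlinarith [mul_pos (mul_pos (mul_pos (by linarith : (0:ℝ) < p₁ + p₂ + p₃)
        (by linarith : (0:ℝ) < p₁ + p₂ - p₃)) (by linarith : (0:ℝ) < p₃ + p₁ - p₂))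
        (by linarith : (0:ℝ) < p₃ - p₁ + p₂)]
    have hdet : (!![1, a; a, 1] : Matrix (Fin 2) (Fin 2) ℝ).det ≠ 0 := by
      simp [Matrix.det_fin_two]
      nlinarith
    have h2 : (!![1, a; a, 1] : Matrix (Fin 2) (Fin 2) ℝ).rank = 2 := by
      have := Matrix.rank_of_isUnit (!![1, a; a, 1] : Matrix (Fin 2) (Fin 2) ℝ)
        ((Matrix.isUnit_iff_isUnit_det _).2 (isUnit_iff_ne_zero.2 hdet))
      simpa using this
    calc 2 = (C * A * B).rank := by rw [hprod, h2]
      _ ≤ (C * A).rank := Matrix.rank_mul_le_left _ _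
      _ ≤ A.rank := Matrix.rank_mul_le_right _ _
  omega
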